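/- Let r₁ > 0, ε ∈ (0,1/2), and let η : (0,r₁) → ℝ be continuous with η(r) > 0 for all r ∈ (0,r₁). Suppose v : (0,r₁) → ℝ is twice continuously differentiable, satisfies v''(r) + (2ε/r)·v'(r) = η(r)·v(r) for all r ∈ (0,r₁), satisfies v(r) > 0 for all r ∈ (0,r₁), and lim_{r→0⁺} v(r) = 0. Then v'(r) > 0 for all r ∈ (0,r₁). -/

import Mathlib

open Set Filter

/-- monotonicity step.  A positive `C²` solution of
`v'' + (2ε/r) v' = η v` on `(0, r₁)` with `η > 0`, `ε ∈ (0,1/2)` and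
`v(r) → 0` as `r → 0⁺` has strictly positive derivative on `(0, r₁)`. -/
theorem derivative_positive (r₁ ε : ℝ) (hr₁ : 0 < r₁)
    (hε : ε ∈ Ioo (0 : ℝ) (1 / 2)) (η v : ℝ → ℝ)
    (hηc : ContinuousOn η (Ioo 0 r₁)) (hη : ∀ r ∈ Ioo 0 r₁, 0 < η r)
    (hv : ContDiffOn ℝ 2 v (Ioo 0 r₁))
    (hode : ∀ r ∈ Ioo 0 r₁,
      deriv (deriv v) r + (2 * ε / r) * deriv v r = η r * v r)
    (hpos : ∀ r ∈ Ioo 0 r₁, 0 < v r)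
    (hlim : Tendsto v (nhdsWithin 0 (Ioi 0)) (nhds 0)) :
    ∀ r ∈ Ioo 0 r₁, 0 < deriv v r := by
  have hopen : IsOpen (Ioo (0:ℝ) r₁) := isOpen_Ioo
  have hdv : ContDiffOn ℝ 1 (deriv v) (Ioo 0 r₁) :=
    hv.deriv_of_isOpen hopen (by norm_num)
  have hdiffv : ∀ r ∈ Ioo (0:ℝ) r₁, DifferentiableAt ℝ v r := fun r hr =>
    (hv.differentiableOn (by norm_num)).differentiableAt (hopen.mem_nhds hr)
  have hdiffdv : ∀ r ∈ Ioo (0:ℝ) r₁, HasDerivAt (deriv v) (deriv (deriv v) r) r := fun r hr =>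
    ((hdv.differentiableOn (by norm_num)).differentiableAt (hopen.mem_nhds hr)).hasDerivAt
  set w : ℝ → ℝ := fun r => r ^ (2 * ε) * deriv v r with hw
  have hwderiv : ∀ r ∈ Ioo (0:ℝ) r₁,
      HasDerivAt w (r ^ (2 * ε) * (η r * v r)) r := by
    intro r hr
    have hr0 : (0:ℝ) < r := hr.1
    have h1 : HasDerivAt (fun x : ℝ => x ^ (2 * ε)) (2 * ε * r ^ (2 * ε - 1)) r :=
      Real.hasDerivAt_rpow_const (Or.inl hr0.ne')
    have h2 : HasDerivAt (fun x => x ^ (2 * ε) * deriv v x) _ r := h1.mul (hdiffdv r hr)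
    convert h2 using 1
    have hrpow : r ^ (2 * ε - 1) = r ^ (2 * ε) / r := by
      rw [Real.rpow_sub hr0, Real.rpow_one]
    rw [hrpow, ← hode r hr]
    field_simp
    ring
  have hwcont : ContinuousOn w (Ioo 0 r₁) := fun r hr =>
    ((hwderiv r hr).differentiableAt.continuousAt).continuousWithinAt
  have hwmono : StrictMonoOn w (Ioo 0 r₁) := by
    apply strictMonoOn_of_deriv_pos (convex_Ioo 0 r₁) hwcont
    intro x hx
    rw [interior_Ioo] at hx
    rw [(hwderiv x hx).deriv]
    exact mul_pos (Real.rpow_pos_of_pos hx.1 _) (mul_pos (hη x hx) (hpos x hx))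
  intro r₀ hr₀
  by_contra hle
  push_neg at hle
  have hwr₀ : w r₀ ≤ 0 := by
    have hp : (0:ℝ) < r₀ ^ (2 * ε) := Real.rpow_pos_of_pos hr₀.1 _
    have : w r₀ = r₀ ^ (2 * ε) * deriv v r₀ := rfl
    rw [this]
    exact mul_nonpos_of_nonneg_of_nonpos hp.le hle
  have hneg : ∀ r ∈ Ioo (0:ℝ) r₀, deriv v r < 0 := by
    intro r hr
    have hrmem : r ∈ Ioo (0:ℝ) r₁ := ⟨hr.1, hr.2.trans hr₀.2⟩
    have hwlt : w r < w r₀ := hwmono hrmem hr₀ hr.2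
    have hp : (0:ℝ) < r ^ (2 * ε) := Real.rpow_pos_of_pos hr.1 _
    have h2 : r ^ (2 * ε) * deriv v r < 0 := hwlt.trans_le hwr₀
    nlinarith
  have hanti : StrictAntiOn v (Ioc 0 r₀) := by
    apply strictAntiOn_of_deriv_neg (convex_Ioc 0 r₀)
    · exact (hv.continuousOn).mono (fun x hx => ⟨hx.1, lt_of_le_of_lt hx.2 hr₀.2⟩)
    · intro x hx
      rw [interior_Ioc] at hx
      exact hneg x hx
  have hev : ∀ᶠ r in nhdsWithin 0 (Ioi 0), v r₀ ≤ v r := by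
    filter_upwards [Ioo_mem_nhdsGT_of_mem (left_mem_Ico.mpr hr₀.1)] with r hr
    exact (hanti ⟨hr.1, hr.2.le⟩ ⟨hr₀.1, le_rfl⟩ hr.2).le
  have : v r₀ ≤ 0 := ge_of_tendsto hlim hev
  exact absurd (hpos r₀ hr₀) (not_lt.mpr this)
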